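/- Every Martin-Löf random sequence with respect to the Bernoulli measure μ_p with computable parameter p ∈ (0,1) satisfies the law of large numbers: lim_{n→∞} (1/n) Σ_{i=0}^{n−1} x(i) = p. -/

import Mathlib

open MeasureTheory Filter
open scoped ENNReal

/-- The cylinder set of a finite binary string. -/
def cylSet (σ : List Bool) : Set (ℕ → Bool) := {z | ∀ i < σ.length, z i = σ.getD i false}

/-- Martin-Löf randomness of `z` with respect to a measure `μ` on Cantor space:
`z` avoids every uniformly c.e. sequence of open sets `U_n` with `μ(U_n) ≤ 2^{-n}`. -/
def MLRandom (μ : Measure (ℕ → Bool)) (z : ℕ → Bool) : Prop :=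
  ¬ ∃ S : ℕ → Set (List Bool),
      REPred (fun q : ℕ × List Bool => q.2 ∈ S q.1) ∧
      (∀ n, μ (⋃ σ ∈ S n, cylSet σ) ≤ (1 / 2 : ℝ≥0∞) ^ n) ∧
      (∀ n, z ∈ ⋃ σ ∈ S n, cylSet σ)

/-- A real number is computable if it can be approximated to precision `2^{-n}` by a
computable sequence of rationals. -/
def ComputableReal (r : ℝ) : Prop :=
  ∃ f : ℕ → ℚ, Computable f ∧ ∀ n, |(f n : ℝ) - r| ≤ (1 / 2 : ℝ) ^ n


/-- count of `true`s, defined via foldr for primrec purposes -/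
def cntB (σ : List Bool) : ℕ := σ.foldr (fun b n => bif b then n + 1 else n) 0

lemma cntB_cons (a : Bool) (l : List Bool) : cntB (a :: l) = bif a then cntB l + 1 else cntB l := rfl

lemma cntB_ofFn {n : ℕ} (g : Fin n → Bool) :
    cntB (List.ofFn g) = ∑ i, if g i then 1 else 0 := by
  induction n with
  | zero => simp [cntB]
  | succ n ih =>
    rw [List.ofFn_succ, cntB_cons, ih, Fin.sum_univ_succ]
    cases h : g 0 <;> simp [h, add_comm]

lemma cast_sum_ite {n : ℕ} (g : Fin n → Bool) :
    ((∑ i, if g i then 1 else 0 : ℕ) : ℝ) = ∑ i, if g i then (1:ℝ) else 0 := by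
  push_cast
  exact Finset.sum_congr rfl fun i _ => by split <;> norm_num

lemma ofFn_eq_self (σ : List Bool) {L : ℕ} (hL : σ.length = L) :
    List.ofFn (fun i : Fin L => σ.getD (i : ℕ) false) = σ := by
  apply List.ext_getElem
  · simp [hL]
  · intro i h1 h2
    have hi : i < L := by simpa [hL] using h2
    rw [List.getElem_ofFn]
    exact List.getD_eq_getElem σ false (by rw [hL]; exact hi)

lemma exp_quad {s : ℝ} (hs : |s| ≤ 1) : Real.exp s ≤ 1 + s + (3/4) * s^2 := by
  have h := Real.exp_bound hs (n := 2) (by norm_num)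
  simp [Finset.sum_range_succ] at h
  have := abs_sub_le_iff.mp h
  nlinarith [this.1, sq_abs s]

lemma chernoff (p : ℝ) (hp : p ∈ Set.Ioo (0:ℝ) 1) (s θ : ℝ) (hs : |s| ≤ 1)
    (L : ℕ) (Q : (Fin L → Bool) → Prop) [DecidablePred Q]
    (hQ : ∀ g, Q g → θ * L ≤ s * ∑ i, (if g i then (1:ℝ) else 0)) :
    ∑ g ∈ Finset.univ.filter Q, (∏ i, if g i then p else 1 - p)
      ≤ Real.exp ((p * s + (3/4) * s^2 - θ) * L) := by
  obtain ⟨hp0, hp1⟩ := hp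
  have hw : ∀ g : Fin L → Bool, (0:ℝ) ≤ ∏ i, if g i then p else 1 - p := by
    intro g
    exact Finset.prod_nonneg fun i _ => by split <;> linarith
  have exp_quad : ∀ u : ℝ, |u| ≤ 1 → Real.exp u ≤ 1 + u + (3/4) * u^2 := by
    intro u hu
    have h := Real.exp_bound hu (n := 2) (by norm_num)
    simp [Finset.sum_range_succ] at h
    have := abs_sub_le_iff.mp h
    nlinarith [this.1, sq_abs u]
  -- step 1 : insert exp factor
  have step1 : ∑ g ∈ Finset.univ.filter Q, (∏ i, if g i then p else 1 - p)
      ≤ Real.exp (-(θ * L)) *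
        ∑ g : Fin L → Bool, (∏ i, if g i then p else 1 - p) *
          Real.exp (s * ∑ i, (if g i then (1:ℝ) else 0)) := by
    rw [Finset.mul_sum]
    refine le_trans (Finset.sum_le_sum ?_) (Finset.sum_le_sum_of_subset_of_nonneg
      (Finset.filter_subset _ _) ?_)
    · intro g hg
      rw [Finset.mem_filter] at hg
      have h1 : (1:ℝ) ≤ Real.exp (-(θ * L)) * Real.exp (s * ∑ i, (if g i then (1:ℝ) else 0)) := by
        rw [← Real.exp_add]
        exact Real.one_le_exp (by linarith [hQ g hg.2])
      calc (∏ i, if g i then p else 1 - p)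
          = 1 * (∏ i, if g i then p else 1 - p) := (one_mul _).symm
        _ ≤ (Real.exp (-(θ * L)) * Real.exp (s * ∑ i, (if g i then (1:ℝ) else 0)))
              * (∏ i, if g i then p else 1 - p) := mul_le_mul_of_nonneg_right h1 (hw g)
        _ = Real.exp (-(θ * L)) * ((∏ i, if g i then p else 1 - p)
              * Real.exp (s * ∑ i, (if g i then (1:ℝ) else 0))) := by ring
    · intro g _ _
      exact mul_nonneg (Real.exp_nonneg _) (mul_nonneg (hw g) (Real.exp_nonneg _))
  -- step 2 : factorize
  have step2 : ∑ g : Fin L → Bool, (∏ i, if g i then p else 1 - p) *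
      Real.exp (s * ∑ i, (if g i then (1:ℝ) else 0))
      = (p * Real.exp s + (1 - p)) ^ L := by
    have : ∀ g : Fin L → Bool, (∏ i, if g i then p else 1 - p) *
        Real.exp (s * ∑ i, (if g i then (1:ℝ) else 0))
        = ∏ i, ((if g i then p else 1 - p) * Real.exp (s * if g i then (1:ℝ) else 0)) := by
      intro g
      rw [Finset.prod_mul_distrib, Finset.mul_sum, Real.exp_sum]
    simp_rw [this]
    have := Finset.prod_univ_sum (fun _ : Fin L => (Finset.univ : Finset Bool))
      (fun _ (b : Bool) => (if b then p else 1 - p) * Real.exp (s * if b then (1:ℝ) else 0))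
    rw [Fintype.piFinset_univ] at this
    rw [← this]
    simp [Fintype.sum_bool]
  -- step 3 : base bound
  have base : p * Real.exp s + (1 - p) ≤ Real.exp (p * s + (3/4) * s^2) := by
    have h1 : Real.exp s ≤ 1 + s + (3/4) * s^2 := exp_quad s hs
    have h2 : p * Real.exp s + (1 - p) ≤ 1 + (p * s + (3/4) * p * s^2) := by nlinarith
    have h3 : (p * s + (3/4) * p * s^2) + 1 ≤ Real.exp (p * s + (3/4) * p * s^2) :=
      Real.add_one_le_exp _
    have h4 : Real.exp (p * s + (3/4) * p * s^2) ≤ Real.exp (p * s + (3/4) * s^2) :=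
      Real.exp_le_exp.mpr (by nlinarith [sq_nonneg s])
    linarith
  calc ∑ g ∈ Finset.univ.filter Q, (∏ i, if g i then p else 1 - p)
      ≤ Real.exp (-(θ * L)) * (p * Real.exp s + (1 - p)) ^ L := by rw [← step2]; exact step1
    _ ≤ Real.exp (-(θ * L)) * (Real.exp (p * s + (3/4) * s^2)) ^ L := by
        refine mul_le_mul_of_nonneg_left (pow_le_pow_left₀ ?_ base L) (Real.exp_nonneg _)
        nlinarith [Real.exp_nonneg s]
    _ = Real.exp ((p * s + (3/4) * s^2 - θ) * L) := by
        rw [← Real.exp_nat_mul, ← Real.exp_add]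
        ring_nf

lemma master (p : ℝ) (hp : p ∈ Set.Ioo (0:ℝ) 1) (μ : Measure (ℕ → Bool))
    (hcyl : ∀ σ : List Bool,
      μ (cylSet σ) = ∏ i ∈ Finset.range σ.length,
        ENNReal.ofReal (if σ.getD i false then p else 1 - p))
    (x : ℕ → Bool) (P : ℕ → ℕ → Bool) (hP : Primrec₂ P) (c : ℝ) (hc : 0 < c)
    (hbound : ∀ L : ℕ,
      ∑ g ∈ Finset.univ.filter (fun g : Fin L → Bool => P L (∑ i, if g i then 1 else 0) = true),
        (∏ i, if g i then p else 1 - p) ≤ Real.exp (-c * L))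
    (hfreq : ∀ N : ℕ, ∃ L, N ≤ L ∧ P L (∑ i : Fin L, if x i then 1 else 0) = true) :
    ¬ MLRandom μ x := by
  intro hx
  -- weight of a cylinder
  have hwt : ∀ {L : ℕ} (g : Fin L → Bool),
      μ (cylSet (List.ofFn g)) = ENNReal.ofReal (∏ i, if g i then p else 1 - p) := by
    intro L g
    rw [hcyl, ENNReal.ofReal_prod_of_nonneg (fun i _ => by rcases hp with ⟨h0, h1⟩; split <;> linarith)]
    rw [List.length_ofFn]
    rw [← Fin.prod_univ_eq_prod_range
      (fun i => ENNReal.ofReal (if (List.ofFn g).getD i false then p else 1 - p)) L]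
    refine Finset.prod_congr rfl fun i _ => ?_
    congr 1
    rw [List.getD_eq_getElem _ false (by simp [i.isLt]), List.getElem_ofFn]
  -- geometric ratio
  set r : ℝ≥0∞ := ENNReal.ofReal (Real.exp (-c)) with hr
  have hr1 : r < 1 := by
    rw [hr]
    refine lt_of_lt_of_le (ENNReal.ofReal_lt_ofReal_iff one_pos |>.mpr ?_) (by simp)
    exact Real.exp_lt_one_iff.mpr (by linarith)
  have hKne : (1 - r)⁻¹ ≠ ⊤ := by
    rw [ENNReal.inv_ne_top]
    exact (tsub_pos_of_lt hr1).ne'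
  obtain ⟨B, hB⟩ := ENNReal.exists_nat_gt hKne
  have hB2 : (1 - r)⁻¹ ≤ 2 ^ B := by
    refine hB.le.trans ?_
    have : (B : ℝ≥0∞) ≤ ((2^B : ℕ) : ℝ≥0∞) := Nat.cast_le.mpr (Nat.lt_two_pow_self (n := B)).le
    simpa using this
  obtain ⟨A, hA⟩ := exists_nat_ge (1 / c)
  have hcA : 1 ≤ c * A := by
    rw [div_le_iff₀ hc] at hA
    linarith
  set N : ℕ → ℕ := fun n => A * (n + B) with hN
  -- the test
  refine hx ⟨fun n => {σ | N n ≤ σ.length ∧ P σ.length (cntB σ) = true}, ?_, ?_, ?_⟩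
  · -- RePred
    apply ComputablePred.to_re
    rw [ComputablePred.computable_iff]
    refine ⟨fun q : ℕ × List Bool =>
      (decide (N q.1 ≤ q.2.length)) && P q.2.length (cntB q.2), ?_, ?_⟩
    · apply Primrec.to_comp
      have h1 : Primrec fun q : ℕ × List Bool => N q.1 :=
        Primrec.nat_mul.comp (Primrec.const A)
          (Primrec.nat_add.comp Primrec.fst (Primrec.const B))
      have h2 : Primrec fun q : ℕ × List Bool => q.2.length :=
        Primrec.list_length.comp Primrec.snd
      have h3 : Primrec fun q : ℕ × List Bool => decide (N q.1 ≤ q.2.length) :=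
        (PrimrecRel.comp Primrec.nat_le h1 h2).decide
      have hcnt : Primrec cntB := by
        have := Primrec.list_foldr (α := List Bool) (β := Bool) (σ := ℕ)
          (f := id) (g := fun _ => 0)
          (h := fun _ p => bif p.1 then p.2 + 1 else p.2)
          Primrec.id (Primrec.const 0)
          (Primrec.cond (Primrec.fst.comp Primrec.snd)
            (Primrec.succ.comp (Primrec.snd.comp Primrec.snd))
            (Primrec.snd.comp Primrec.snd))
        exact this.of_eq fun l => rfl
      have h4 : Primrec fun q : ℕ × List Bool => P q.2.length (cntB q.2) :=
        hP.comp h2 (hcnt.comp Primrec.snd)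
      exact (Primrec.dom_bool₂ (· && ·)).comp h3 h4
    · funext q
      simp only [Set.mem_setOf_eq, Bool.and_eq_true, decide_eq_true_eq]
  · -- measure bound
    intro n
    have hsub : (⋃ σ ∈ {σ : List Bool | N n ≤ σ.length ∧ P σ.length (cntB σ) = true}, cylSet σ)
        ⊆ ⋃ (j : ℕ), ⋃ g ∈ (Finset.univ.filter
            (fun g : Fin (N n + j) → Bool => P (N n + j) (∑ i, if g i then 1 else 0) = true)),
          cylSet (List.ofFn g) := by
      intro z hz
      rw [Set.mem_iUnion₂] at hz
      obtain ⟨σ, ⟨hlen, hPσ⟩, hzσ⟩ := hz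
      rw [Set.mem_iUnion]
      refine ⟨σ.length - N n, ?_⟩
      have hLeq : σ.length = N n + (σ.length - N n) := by omega
      rw [Set.mem_iUnion₂]
      refine ⟨fun i => σ.getD (i : ℕ) false, ?_, ?_⟩
      · rw [Finset.mem_filter]
        refine ⟨Finset.mem_univ _, ?_⟩
        rw [← cntB_ofFn, ofFn_eq_self σ hLeq, ← hLeq]
        exact hPσ
      · rw [ofFn_eq_self σ hLeq]
        exact hzσ
    refine le_trans (measure_mono hsub) ?_
    refine le_trans (measure_iUnion_le _) ?_
    have hstep : ∀ j : ℕ,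
        μ (⋃ g ∈ (Finset.univ.filter
            (fun g : Fin (N n + j) → Bool => P (N n + j) (∑ i, if g i then 1 else 0) = true)),
          cylSet (List.ofFn g)) ≤ ENNReal.ofReal (Real.exp (-c * (N n + j))) := by
      intro j
      refine le_trans (measure_biUnion_finset_le _ _) ?_
      have : ∀ g ∈ (Finset.univ.filter
            (fun g : Fin (N n + j) → Bool => P (N n + j) (∑ i, if g i then 1 else 0) = true)),
          μ (cylSet (List.ofFn g)) = ENNReal.ofReal (∏ i, if g i then p else 1 - p) :=
        fun g _ => hwt g
      rw [Finset.sum_congr rfl this,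
        ← ENNReal.ofReal_sum_of_nonneg (fun g _ =>
          Finset.prod_nonneg fun i _ => by rcases hp with ⟨h0, h1⟩; split <;> linarith)]
      exact ENNReal.ofReal_le_ofReal (by simpa using hbound (N n + j))
    refine le_trans (ENNReal.tsum_le_tsum hstep) ?_
    have hsplit : ∀ j : ℕ, ENNReal.ofReal (Real.exp (-c * (N n + j)))
        = ENNReal.ofReal (Real.exp (-c * N n)) * r ^ j := by
      intro j
      rw [hr, ← ENNReal.ofReal_pow (Real.exp_nonneg _), ← Real.exp_nat_mul,
        ← ENNReal.ofReal_mul (Real.exp_nonneg _), ← Real.exp_add]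
      congr 1
      push_cast
      ring
    rw [tsum_congr hsplit, ENNReal.tsum_mul_left, ENNReal.tsum_geometric]
    -- final arithmetic
    have hexp : Real.exp (-c * N n) ≤ (1/2 : ℝ) ^ (n + B) := by
      have h1 : Real.exp (-c * N n) ≤ Real.exp (-(n + B : ℕ)) := by
        apply Real.exp_le_exp.mpr
        have : ((n + B : ℕ) : ℝ) ≤ c * N n := by
          rw [hN]
          push_cast
          calc ((n : ℝ) + B) = 1 * ((n : ℝ) + B) := (one_mul _).symm
            _ ≤ (c * A) * ((n : ℝ) + B) := by
                apply mul_le_mul_of_nonneg_right hcA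
                positivity
            _ = c * (A * ((n : ℝ) + B)) := by ring
        linarith
      refine h1.trans ?_
      rw [show (-(n + B : ℕ) : ℝ) = (n + B : ℕ) * (-1) by ring, Real.exp_nat_mul]
      apply pow_le_pow_left₀ (Real.exp_nonneg _)
      rw [Real.exp_neg]
      rw [inv_le_comm₀ (Real.exp_pos 1) (by norm_num)]
      have := Real.add_one_le_exp 1
      linarith
    calc ENNReal.ofReal (Real.exp (-c * N n)) * (1 - r)⁻¹
        ≤ ENNReal.ofReal ((1/2 : ℝ) ^ (n + B)) * 2 ^ B :=
          mul_le_mul' (ENNReal.ofReal_le_ofReal hexp) hB2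
      _ = (1/2 : ℝ≥0∞) ^ (n + B) * 2 ^ B := by
          rw [ENNReal.ofReal_pow (by norm_num)]
          rw [show ENNReal.ofReal (1/2 : ℝ) = (1/2 : ℝ≥0∞) by
            rw [ENNReal.ofReal_div_of_pos (by norm_num)]; norm_num]
      _ = (1/2 : ℝ≥0∞) ^ n := by
          rw [pow_add, mul_assoc]
          have : (1/2 : ℝ≥0∞) ^ B * 2 ^ B = 1 := by
            rw [← mul_pow]
            norm_num
            rw [ENNReal.inv_mul_cancel (by norm_num) (by norm_num)]
            exact one_pow B
          rw [this, mul_one]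
  · -- x in the union
    intro n
    obtain ⟨L, hL1, hL2⟩ := hfreq (N n)
    rw [Set.mem_iUnion₂]
    refine ⟨List.ofFn (fun i : Fin L => x i), ?_, ?_⟩
    · constructor
      · rw [List.length_ofFn]; exact hL1
      · rw [List.length_ofFn, cntB_ofFn]; exact hL2
    · intro i hi
      rw [List.length_ofFn] at hi
      rw [List.getD_eq_getElem _ false (by simp [hi]), List.getElem_ofFn]

/-- every Martin-Löf random sequence with respect to the Bernoulli measure
`μ_p` with computable parameter `p ∈ (0,1)` satisfies the law of large numbers. -/
theorem mlrandom_lln (p : ℝ) (hp : p ∈ Set.Ioo (0 : ℝ) 1) (hpc : ComputableReal p)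
    (μ : Measure (ℕ → Bool)) [IsProbabilityMeasure μ]
    (hcyl : ∀ σ : List Bool,
      μ (cylSet σ) = ∏ i ∈ Finset.range σ.length,
        ENNReal.ofReal (if σ.getD i false then p else 1 - p))
    (x : ℕ → Bool) (hx : MLRandom μ x) :
    Tendsto (fun n : ℕ => (∑ i ∈ Finset.range n, if x i then (1 : ℝ) else 0) / n)
      atTop (nhds p) := by
  obtain ⟨hp0, hp1⟩ := hp
  set avg : ℕ → ℝ := fun n => (∑ i ∈ Finset.range n, if x i then (1 : ℝ) else 0) / n with havg
  -- basic facts about avg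
  have hsum_eq : ∀ L : ℕ, (∑ i ∈ Finset.range L, if x i then (1 : ℝ) else 0)
      = ((∑ i : Fin L, if x i then 1 else 0 : ℕ) : ℝ) := by
    intro L
    rw [cast_sum_ite]
    exact (Fin.sum_univ_eq_sum_range (fun i => if x i then (1:ℝ) else 0) L).symm
  have havg_nonneg : ∀ L, 0 ≤ avg L := by
    intro L
    apply div_nonneg _ (Nat.cast_nonneg L)
    exact Finset.sum_nonneg fun i _ => by split <;> norm_num
  have havg_le_one : ∀ L, avg L ≤ 1 := by
    intro L
    rw [havg]
    rcases Nat.eq_zero_or_pos L with h | h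
    · simp [h]
    · rw [div_le_one (by exact_mod_cast h)]
      calc (∑ i ∈ Finset.range L, if x i then (1:ℝ) else 0)
          ≤ ∑ i ∈ Finset.range L, 1 := Finset.sum_le_sum fun i _ => by split <;> norm_num
        _ = L := by simp
  by_contra hT
  rw [Metric.tendsto_atTop] at hT
  push_neg at hT
  obtain ⟨ε, hε, hdev⟩ := hT
  simp only [Real.dist_eq] at hdev
  -- case split: deviations above or below infinitely often
  have hcases : (∀ N, ∃ L, N ≤ L ∧ p + ε ≤ avg L) ∨ (∀ N, ∃ L, N ≤ L ∧ avg L ≤ p - ε) := by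
    by_cases hU : ∀ N, ∃ L, N ≤ L ∧ p + ε ≤ avg L
    · exact Or.inl hU
    · right
      push_neg at hU
      obtain ⟨N₀, hN₀⟩ := hU
      intro N
      obtain ⟨L, hL1, hL2⟩ := hdev (max N N₀)
      refine ⟨L, le_trans (le_max_left _ _) hL1, ?_⟩
      have h3 := hN₀ L (le_trans (le_max_right _ _) hL1)
      rcases abs_cases (avg L - p) with ⟨h4, _⟩ | ⟨h4, _⟩
      · rw [h4] at hL2; linarith
      · rw [h4] at hL2; linarith
  rcases hcases with hU | hU
  · -- upper deviations
    have hpe1 : p + ε ≤ 1 := by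
      obtain ⟨L, _, hL2⟩ := hU 0
      exact le_trans hL2 (havg_le_one L)
    obtain ⟨q, hq1, hq2⟩ := exists_rat_btwn (show p < p + ε by linarith)
    have hq0 : 0 < (q:ℝ) := lt_trans hp0 hq1
    have hqpos : 0 < q := by exact_mod_cast hq0
    set a : ℕ := q.num.toNat with ha
    set b : ℕ := q.den with hb
    have hbpos : 0 < (b:ℝ) := by exact_mod_cast q.pos
    have hab : (q:ℝ) = (a:ℝ) / (b:ℝ) := by
      rw [Rat.cast_def]
      congr 1
      rw [ha]
      exact_mod_cast congrArg Int.cast (Int.toNat_of_nonneg (Rat.num_pos.mpr hqpos).le).symm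
    set δ : ℝ := (q:ℝ) - p with hδ
    have hδ0 : 0 < δ := by rw [hδ]; linarith
    have hδ1 : δ ≤ 1 := by rw [hδ]; linarith
    refine master p ⟨hp0, hp1⟩ μ hcyl x
      (fun L m => decide (a * L ≤ b * m)) ?_ (δ^2/4) (by positivity) ?_ ?_ hx
    · exact (PrimrecRel.comp Primrec.nat_le
        (Primrec.nat_mul.comp (Primrec.const a) Primrec.fst)
        (Primrec.nat_mul.comp (Primrec.const b) Primrec.snd)).decide
    · intro L
      have key := chernoff p ⟨hp0, hp1⟩ δ (δ * q) (by rw [abs_of_pos hδ0]; exact hδ1) L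
        (Q := fun g : Fin L → Bool => decide (a * L ≤ b * (∑ i, if g i then 1 else 0)) = true) ?_
      · refine le_trans key (le_of_eq ?_)
        congr 1
        rw [hδ]
        ring
      · intro g hg
        rw [decide_eq_true_eq] at hg
        have hcast : ((a:ℝ) * L ≤ (b:ℝ) * ((∑ i, if g i then 1 else 0 : ℕ):ℝ)) := by
          exact_mod_cast hg
        rw [← cast_sum_ite]
        set m : ℝ := ((∑ i, if g i then 1 else 0 : ℕ):ℝ) with hm
        have h6 : (q:ℝ) * L ≤ m := by
          rw [hab, div_mul_eq_mul_div, div_le_iff₀ hbpos]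
          nlinarith
        nlinarith
    · intro N
      obtain ⟨L, hL1, hL2⟩ := hU N
      refine ⟨L, hL1, ?_⟩
      rw [decide_eq_true_eq]
      have hL0 : 0 < L := by
        rcases Nat.eq_zero_or_pos L with h | h
        · exfalso; rw [h] at hL2; simp [havg] at hL2; linarith
        · exact h
      have hLR : (0:ℝ) < L := by exact_mod_cast hL0
      set m : ℝ := ((∑ i : Fin L, if x i then 1 else 0 : ℕ):ℝ) with hm
      have h5 : (q:ℝ) * L < m := by
        have h7 : (q:ℝ) < avg L := lt_of_lt_of_le hq2 hL2
        simp only [havg] at h7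
        rw [hsum_eq, lt_div_iff₀ hLR] at h7
        rw [hm]
        exact h7
      have haqb : (a:ℝ) = (q:ℝ) * b := by rw [hab]; field_simp
      have h8 : (a:ℝ) * L < (b:ℝ) * m := by rw [haqb]; nlinarith
      rw [hm] at h8
      exact_mod_cast h8.le
  · -- lower deviations
    obtain ⟨q, hq1, hq2⟩ := exists_rat_btwn (show max (p - ε) 0 < p from max_lt (by linarith) hp0)
    have hq0 : 0 < (q:ℝ) := lt_of_le_of_lt (le_max_right _ _) hq1
    have hqpos : 0 < q := by exact_mod_cast hq0
    have hqe : p - ε < (q:ℝ) := lt_of_le_of_lt (le_max_left _ _) hq1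
    set a : ℕ := q.num.toNat with ha
    set b : ℕ := q.den with hb
    have hbpos : 0 < (b:ℝ) := by exact_mod_cast q.pos
    have hab : (q:ℝ) = (a:ℝ) / (b:ℝ) := by
      rw [Rat.cast_def]
      congr 1
      rw [ha]
      exact_mod_cast congrArg Int.cast (Int.toNat_of_nonneg (Rat.num_pos.mpr hqpos).le).symm
    set δ : ℝ := p - (q:ℝ) with hδ
    have hδ0 : 0 < δ := by rw [hδ]; linarith
    have hδ1 : δ ≤ 1 := by rw [hδ]; linarith
    refine master p ⟨hp0, hp1⟩ μ hcyl x
      (fun L m => decide (b * m ≤ a * L)) ?_ (δ^2/4) (by positivity) ?_ ?_ hx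
    · exact (PrimrecRel.comp Primrec.nat_le
        (Primrec.nat_mul.comp (Primrec.const b) Primrec.snd)
        (Primrec.nat_mul.comp (Primrec.const a) Primrec.fst)).decide
    · intro L
      have key := chernoff p ⟨hp0, hp1⟩ (-δ) (-δ * q) (by rw [abs_neg, abs_of_pos hδ0]; exact hδ1) L
        (Q := fun g : Fin L → Bool => decide (b * (∑ i, if g i then 1 else 0) ≤ a * L) = true) ?_
      · refine le_trans key (le_of_eq ?_)
        congr 1
        rw [hδ]
        ring
      · intro g hg
        rw [decide_eq_true_eq] at hg
        have hcast : ((b:ℝ) * ((∑ i, if g i then 1 else 0 : ℕ):ℝ) ≤ (a:ℝ) * L) := by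
          exact_mod_cast hg
        rw [← cast_sum_ite]
        set m : ℝ := ((∑ i, if g i then 1 else 0 : ℕ):ℝ) with hm
        have h6 : m ≤ (q:ℝ) * L := by
          rw [hab, div_mul_eq_mul_div, le_div_iff₀ hbpos]
          nlinarith
        nlinarith
    · intro N
      obtain ⟨L, hL1, hL2⟩ := hU N
      refine ⟨L, hL1, ?_⟩
      rw [decide_eq_true_eq]
      set m : ℝ := ((∑ i : Fin L, if x i then 1 else 0 : ℕ):ℝ) with hm
      rcases Nat.eq_zero_or_pos L with h | hL0
      · subst h
        simp
      have hLR : (0:ℝ) < L := by exact_mod_cast hL0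
      have h5 : m ≤ (q:ℝ) * L := by
        have h7 : avg L < (q:ℝ) := lt_of_le_of_lt hL2 hqe
        simp only [havg] at h7
        rw [hsum_eq, div_lt_iff₀ hLR] at h7
        rw [hm]
        nlinarith
      have haqb : (a:ℝ) = (q:ℝ) * b := by rw [hab]; field_simp
      have h8 : (b:ℝ) * m ≤ (a:ℝ) * L := by rw [haqb]; nlinarith
      rw [hm] at h8
      exact_mod_cast h8
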